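/- For any integer $\ell \ge 1$, define $f_\ell(t) := \big(\log(1+t) - \sum_{k=1}^{\ell-1}(-1)^{k+1} t^k/k\big) \big/ \big((-1)^\ell t^\ell / \ell\big)$ for $t > -1$, $t \ne 0$, and $f_\ell(0) := -1$. Then $f_\ell$ is continuous and strictly increasing on $(-1, \infty)$. -/

import Mathlib

open Real MeasureTheory Set intervalIntegral

private lemma fan_denom_ge {a x s : ℝ} (hax : a ≤ x) (hs0 : 0 ≤ s) (hs1 : s ≤ 1) :
    min 1 (1 + a) ≤ 1 + x * s := by
  rcases le_or_gt 0 x with h | h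
  · have : (0:ℝ) ≤ x * s := mul_nonneg h hs0
    calc min 1 (1+a) ≤ 1 := min_le_left _ _
    _ ≤ 1 + x * s := by linarith
  · have hx1 : x * 1 ≤ x * s := mul_le_mul_of_nonpos_left hs1 h.le
    calc min 1 (1+a) ≤ 1 + a := min_le_right _ _
    _ ≤ 1 + x * s := by nlinarith

private lemma fan_denom_pos {x s : ℝ} (hx : -1 < x) (hs0 : 0 ≤ s) (hs1 : s ≤ 1) :
    0 < 1 + x * s := by
  have h := fan_denom_ge (le_refl x) hs0 hs1
  have : 0 < min 1 (1 + x) := lt_min one_pos (by linarith)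
  linarith

private lemma fan_integrable {x : ℝ} (hx : -1 < x) (l : ℕ) :
    IntervalIntegrable (fun s => s ^ (l-1) / (1 + x * s)) volume 0 1 := by
  apply ContinuousOn.intervalIntegrable
  apply ContinuousOn.div (by fun_prop) (by fun_prop)
  intro s hs
  rw [Set.uIcc_of_le (by norm_num : (0:ℝ) ≤ 1)] at hs
  exact ne_of_gt (fan_denom_pos hx hs.1 hs.2)

/-- derivative of the remainder -/
private lemma fan_hasDerivAt (l : ℕ) (hl : 1 ≤ l) {x : ℝ} (hx : -1 < x) :
    HasDerivAt (fun x : ℝ => Real.log (1 + x) -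
      ∑ k ∈ Finset.Icc 1 (l - 1), (-1 : ℝ) ^ (k + 1) * x ^ k / k)
      ((-x) ^ (l-1) / (1 + x)) x := by
  have h1x : (0:ℝ) < 1 + x := by linarith
  have hlog : HasDerivAt (fun x : ℝ => Real.log (1 + x)) (1 / (1 + x)) x := by
    simpa using (HasDerivAt.log ((hasDerivAt_id x).const_add 1) (ne_of_gt h1x))
  have hsum : HasDerivAt (fun x : ℝ => ∑ k ∈ Finset.Icc 1 (l - 1), (-1 : ℝ) ^ (k + 1) * x ^ k / k)
      (∑ k ∈ Finset.Icc 1 (l - 1), (-1 : ℝ) ^ (k + 1) * x ^ (k - 1)) x := by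
    apply HasDerivAt.fun_sum
    intro k hk
    rw [Finset.mem_Icc] at hk
    have hk0 : (k:ℝ) ≠ 0 := Nat.cast_ne_zero.2 (by omega)
    have : HasDerivAt (fun x : ℝ => (-1 : ℝ) ^ (k + 1) * x ^ k / k)
        ((-1 : ℝ) ^ (k + 1) / k * (k * x ^ (k-1))) x := by
      simpa [mul_div_assoc, div_mul_eq_mul_div, mul_comm, mul_assoc, mul_left_comm]
        using (hasDerivAt_pow k x).const_mul ((-1 : ℝ) ^ (k + 1) / k)
    refine this.congr_deriv ?_
    field_simp
  have hgeom : ∑ k ∈ Finset.Icc 1 (l - 1), (-1 : ℝ) ^ (k + 1) * x ^ (k - 1)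
      = (1 - (-x) ^ (l-1)) / (1 + x) := by
    have h1 : Finset.Icc 1 (l-1) = Finset.Ico 1 l := by
      rw [← Finset.Ico_add_one_right_eq_Icc]
      congr 1
      omega
    rw [h1, Finset.sum_Ico_eq_sum_range]
    have h2 : ∀ j ∈ Finset.range (l - 1), (-1 : ℝ) ^ (1 + j + 1) * x ^ (1 + j - 1)
        = (-x) ^ j := by
      intro j _
      have : 1 + j - 1 = j := by omega
      rw [this]
      rw [show 1 + j + 1 = j + 2 by omega]
      rw [pow_add, neg_pow]
      ring
    rw [Finset.sum_congr rfl h2]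
    rw [geom_sum_eq (by intro h; rw [← h] at hx; norm_num at hx : (-x : ℝ) ≠ 1)]
    rw [show (-x : ℝ) - 1 = -(1+x) from by ring, div_neg, ← neg_div, neg_sub]
  have := hlog.sub hsum
  rw [hgeom] at this
  refine this.congr_deriv ?_
  ring

private lemma fan_repr (l : ℕ) (hl : 1 ≤ l) {x : ℝ} (hx : -1 < x) :
    Real.log (1 + x) - ∑ k ∈ Finset.Icc 1 (l - 1), (-1 : ℝ) ^ (k + 1) * x ^ k / k
      = (-1:ℝ)^(l-1) * x ^ l * ∫ s in (0:ℝ)..1, s ^ (l-1) / (1 + x * s) := by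
  have hmem : ∀ t ∈ Set.uIcc (0:ℝ) x, -1 < t := by
    intro t ht
    have h1 : min 0 x ≤ t := ht.1
    have : (-1:ℝ) < min 0 x := lt_min (by norm_num) hx
    linarith
  have hFTC : ∫ t in (0:ℝ)..x, (-t)^(l-1)/(1+t)
      = (Real.log (1 + x) - ∑ k ∈ Finset.Icc 1 (l - 1), (-1 : ℝ) ^ (k + 1) * x ^ k / k)
        - (Real.log (1 + 0) - ∑ k ∈ Finset.Icc 1 (l - 1), (-1 : ℝ) ^ (k + 1) * (0:ℝ) ^ k / k) := by
    apply intervalIntegral.integral_eq_sub_of_hasDerivAt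
    · intro t ht
      exact fan_hasDerivAt l hl (hmem t ht)
    · apply ContinuousOn.intervalIntegrable
      apply ContinuousOn.div (by fun_prop) (by fun_prop)
      intro t ht
      have := hmem t ht
      intro h; linarith [h]
  have hzero : (Real.log (1 + 0) - ∑ k ∈ Finset.Icc 1 (l - 1), (-1 : ℝ) ^ (k + 1) * (0:ℝ) ^ k / k) = 0 := by
    rw [Finset.sum_eq_zero]
    · norm_num
    · intro k hk
      rw [Finset.mem_Icc] at hk
      rw [zero_pow (by omega : k ≠ 0)]
      ring
  rw [hzero, sub_zero] at hFTC
  rw [← hFTC]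
  have hsub := intervalIntegral.smul_integral_comp_mul_left (a := (0:ℝ)) (b := 1)
    (fun t => (-t)^(l-1)/(1+t)) x
  simp only [mul_zero, mul_one, smul_eq_mul] at hsub
  rw [← hsub]
  have hintg : ∀ s : ℝ, (-(x*s))^(l-1)/(1+x*s) = (-x)^(l-1) * (s^(l-1)/(1+x*s)) := by
    intro s
    rw [← neg_mul, mul_pow, mul_div_assoc]
  simp only [hintg]
  rw [intervalIntegral.integral_const_mul]
  have hxl : x ^ l = x * x^(l-1) := by
    rw [← pow_succ']
    congr 1
    omega
  rw [hxl, neg_pow]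
  ring

private lemma fan_contOn (l : ℕ) :
    ContinuousOn (fun x : ℝ => ∫ s in (0:ℝ)..1, s ^ (l-1) / (1 + x * s)) (Set.Ioi (-1:ℝ)) := by
  intro x₀ hx₀
  have hx₀' : -1 < x₀ := hx₀
  set a : ℝ := (x₀ - 1)/2 with ha
  have ha1 : -1 < a := by rw [ha]; linarith
  have hax : a < x₀ := by rw [ha]; linarith
  set m : ℝ := min 1 (1 + a) with hmdef
  have hm : 0 < m := lt_min one_pos (by linarith)
  apply ContinuousAt.continuousWithinAt
  apply ContinuousOn.continuousAt (s := Set.Ici a) ?_ (Ici_mem_nhds hax)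
  apply LipschitzOnWith.continuousOn (K := ⟨m⁻¹ * m⁻¹, by positivity⟩)
  apply LipschitzOnWith.of_dist_le_mul
  intro x hx y hy
  have hX : -1 < x := lt_of_lt_of_le ha1 hx
  have hY : -1 < y := lt_of_lt_of_le ha1 hy
  have hsub : (∫ s in (0:ℝ)..1, s ^ (l-1) / (1 + x * s)) - ∫ s in (0:ℝ)..1, s ^ (l-1) / (1 + y * s)
      = ∫ s in (0:ℝ)..1, (s ^ (l-1) / (1 + x * s) - s ^ (l-1) / (1 + y * s)) :=
    (intervalIntegral.integral_sub (fan_integrable hX l) (fan_integrable hY l)).symm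
  rw [Real.dist_eq, Real.dist_eq, hsub]
  have hbound : ∀ s ∈ Set.uIoc (0:ℝ) 1,
      ‖s ^ (l-1) / (1 + x * s) - s ^ (l-1) / (1 + y * s)‖ ≤ m⁻¹ * m⁻¹ * |x - y| := by
    intro s hs
    rw [Set.uIoc_of_le (by norm_num : (0:ℝ) ≤ 1)] at hs
    obtain ⟨hs0, hs1⟩ := hs
    have hdx : m ≤ 1 + x * s := fan_denom_ge hx hs0.le hs1
    have hdy : m ≤ 1 + y * s := fan_denom_ge hy hs0.le hs1
    have hdx0 : 0 < 1 + x * s := lt_of_lt_of_le hm hdx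
    have hdy0 : 0 < 1 + y * s := lt_of_lt_of_le hm hdy
    have heq : s ^ (l-1) / (1 + x * s) - s ^ (l-1) / (1 + y * s)
        = s ^ (l-1) * s * (y - x) / ((1 + x * s) * (1 + y * s)) := by
      rw [div_sub_div _ _ hdx0.ne' hdy0.ne']
      ring
    rw [Real.norm_eq_abs, heq, abs_div]
    have hnum : |s ^ (l-1) * s * (y - x)| ≤ |x - y| := by
      rw [abs_mul, abs_mul, abs_of_nonneg (pow_nonneg hs0.le _), abs_of_nonneg hs0.le,
        abs_sub_comm y x]
      have h1 : s ^ (l-1) * s ≤ 1 := mul_le_one₀ (pow_le_one₀ hs0.le hs1) hs0.le hs1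
      calc s ^ (l-1) * s * |x - y| ≤ 1 * |x - y| :=
            mul_le_mul_of_nonneg_right h1 (abs_nonneg _)
        _ = |x - y| := one_mul _
    have hden : m * m ≤ |(1 + x * s) * (1 + y * s)| := by
      rw [abs_of_pos (mul_pos hdx0 hdy0)]
      exact mul_le_mul hdx hdy hm.le hdx0.le
    calc |s ^ (l-1) * s * (y - x)| / |(1 + x * s) * (1 + y * s)|
        ≤ |x - y| / (m * m) := div_le_div₀ (abs_nonneg _) hnum (by positivity) hden
      _ = m⁻¹ * m⁻¹ * |x - y| := by rw [div_eq_mul_inv, mul_inv]; ring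
  calc ‖∫ s in (0:ℝ)..1, (s ^ (l-1) / (1 + x * s) - s ^ (l-1) / (1 + y * s))‖
      ≤ m⁻¹ * m⁻¹ * |x - y| * |1 - 0| :=
        intervalIntegral.norm_integral_le_of_norm_le_const hbound
    _ ≤ (⟨m⁻¹ * m⁻¹, by positivity⟩ : NNReal) * dist x y := by
        rw [Real.dist_eq]
        simp only [NNReal.coe_mk]
        norm_num

/-- Higher-order generalization of Fan–Grama–Liu: for integer `ℓ ≥ 1`, the
function `f_ℓ(t) = (log(1+t) - ∑_{k=1}^{ℓ-1} (-1)^{k+1} t^k/k) / ((-1)^ℓ t^ℓ/ℓ)`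
for `t > -1`, `t ≠ 0`, extended by `f_ℓ(0) = -1`, is continuous and strictly
increasing on `(-1, ∞)`. -/
theorem fan_generalization_monotone (l : ℕ) (hl : 1 ≤ l) (f : ℝ → ℝ)
    (hf : ∀ x : ℝ, -1 < x → x ≠ 0 →
      f x = (Real.log (1 + x) - ∑ k ∈ Finset.Icc 1 (l - 1), (-1 : ℝ) ^ (k + 1) * x ^ k / k) /
        ((-1 : ℝ) ^ l * x ^ l / l))
    (hf0 : f 0 = -1) :
    ContinuousOn f (Set.Ioi (-1 : ℝ)) ∧ StrictMonoOn f (Set.Ioi (-1 : ℝ)) := by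
  have hl0 : (l:ℝ) ≠ 0 := Nat.cast_ne_zero.2 (by omega)
  have hfg : Set.EqOn f (fun x : ℝ => -(l:ℝ) * ∫ s in (0:ℝ)..1, s ^ (l-1) / (1 + x * s))
      (Set.Ioi (-1:ℝ)) := by
    intro z hz
    have hz' : -1 < z := hz
    by_cases hz0 : z = 0
    · subst hz0
      have hI : (∫ s in (0:ℝ)..1, s ^ (l-1) / (1 + 0 * s)) = 1 / l := by
        simp only [zero_mul, add_zero, div_one]
        rw [integral_pow, show l - 1 + 1 = l from by omega, one_pow,
          zero_pow (by omega : l ≠ 0), sub_zero,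
          show ((l-1:ℕ):ℝ) + 1 = (l:ℝ) from by rw [Nat.cast_sub hl]; push_cast; ring]
      simp only [hI, hf0]
      field_simp
    · rw [hf z hz' hz0, fan_repr l hl hz']
      have h1 : ((-1:ℝ))^l = -((-1:ℝ)^(l-1)) := by
        conv_lhs => rw [show l = l-1+1 by omega]
        rw [pow_succ]
        ring
      have h2 : ((-1:ℝ))^(l-1) ≠ 0 := pow_ne_zero _ (by norm_num)
      have h3 : z ^ l ≠ 0 := pow_ne_zero _ hz0
      rw [h1]
      generalize (l - 1 : ℕ) = n at h2 ⊢
      field_simp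
  constructor
  · exact (continuousOn_const.mul (fan_contOn l)).congr hfg
  · intro x hx y hy hxy
    rw [hfg hx, hfg hy]
    have hX : -1 < x := hx
    have hY : -1 < y := hy
    have hpos : 0 < ∫ s in (0:ℝ)..1, (s ^ (l-1) / (1 + x * s) - s ^ (l-1) / (1 + y * s)) := by
      apply intervalIntegral.intervalIntegral_pos_of_pos_on
        ((fan_integrable hX l).sub (fan_integrable hY l))
      · intro s hs
        obtain ⟨hs0, hs1⟩ := hs
        have hdx0 : 0 < 1 + x * s := fan_denom_pos hX hs0.le hs1.le
        have hlt : 1 + x * s < 1 + y * s := by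
          have := mul_lt_mul_of_pos_right hxy hs0
          linarith
        exact sub_pos.2 (div_lt_div_of_pos_left (pow_pos hs0 _) hdx0 hlt)
      · norm_num
    rw [intervalIntegral.integral_sub (fan_integrable hX l) (fan_integrable hY l)] at hpos
    have hlp : (0:ℝ) < l := by
      exact_mod_cast Nat.pos_of_ne_zero (by omega)
    nlinarith
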